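/- Let R be a discrete valuation ring and let T be a commutative R-algebra which is free of rank two as an R-module with basis {1, z} (so z satisfies a monic quadratic equation over R). Let E be a T-module which, as an R-module, is free of rank two with basis x, y, and write z·x = a x + b y and z·y = c x + d y with a, b, c, d ∈ R. Then the kernel of the canonical homomorphism of graded R-algebras Sym_R(E) → Sym_T(E) is the ideal generated by the single quadratic element c·x² + (d − a)·x·y − b·y² (where x, y denote the images of x, y in degree one of Sym_R(E)). -/

import Mathlib

open TensorAlgebra

/-- The relation on the tensor algebra used to define the symmetric algebra. -/
inductive SymRel (R M : Type*) [CommRing R] [AddCommGroup M] [Module R M] :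
    TensorAlgebra R M → TensorAlgebra R M → Prop
  | mul_comm (x y : M) : SymRel R M (ι R x * ι R y) (ι R y * ι R x)

/-- The symmetric algebra `Sym_R(M)` of a module `M` over a commutative ring `R`. -/
abbrev SymmAlg (R M : Type*) [CommRing R] [AddCommGroup M] [Module R M] :=
  RingQuot (_root_.SymRel R M)

/-- The canonical `R`-linear map `M → Sym_R(M)` (inclusion of degree one). -/
noncomputable def symι (R M : Type*) [CommRing R] [AddCommGroup M] [Module R M] :
    M →ₗ[R] SymmAlg R M :=
  (RingQuot.mkAlgHom R (_root_.SymRel R M)).toLinearMap ∘ₗ ι R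

variable (R T E : Type*) [CommRing R] [CommRing T] [Algebra R T]
  [AddCommGroup E] [Module T E] [Module R E] [IsScalarTower R T E]

/-- The canonical morphism of graded `R`-algebras `Sym_R(E) → Sym_T(E)` induced, via the
universal property of the symmetric algebra, by the `R`-linear map `E → Sym_T(E)`. -/
noncomputable def symMap : SymmAlg R E →ₐ[R] SymmAlg T E :=
  RingQuot.liftAlgHom R ⟨TensorAlgebra.lift R ((symι T E).restrictScalars R), by
    rintro x y ⟨a, b⟩
    simp only [map_mul, TensorAlgebra.lift_ι_apply]
    have h := RingQuot.mkAlgHom_rel T (_root_.SymRel.mul_comm (R := T) (M := E) a b)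
    simpa only [map_mul, symι, LinearMap.restrictScalars_apply, LinearMap.coe_comp,
      Function.comp_apply, AlgHom.toLinearMap_apply] using h⟩

section CommSec

variable {R' M : Type*} [CommRing R'] [AddCommGroup M] [Module R' M]

lemma symmAlg_commute (x y : TensorAlgebra R' M) :
    Commute (RingQuot.mkAlgHom R' (_root_.SymRel R' M) x) (RingQuot.mkAlgHom R' (_root_.SymRel R' M) y) := by
  induction x using TensorAlgebra.induction with
  | algebraMap r =>
      rw [AlgHom.commutes]
      exact Algebra.commute_algebraMap_left r _
  | ι m =>
      induction y using TensorAlgebra.induction with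
      | algebraMap r =>
          rw [AlgHom.commutes]
          exact Algebra.commute_algebraMap_right r _
      | ι m' =>
          have h := RingQuot.mkAlgHom_rel R' (_root_.SymRel.mul_comm (R := R') (M := M) m m')
          rw [map_mul, map_mul] at h
          exact h
      | mul y1 y2 h1 h2 =>
          rw [map_mul]
          exact h1.mul_right h2
      | add y1 y2 h1 h2 =>
          rw [map_add]
          exact h1.add_right h2
  | mul x1 x2 h1 h2 =>
      rw [map_mul]
      exact h1.mul_left h2
  | add x1 x2 h1 h2 =>
      rw [map_add]
      exact h1.add_left h2

noncomputable instance : CommRing (SymmAlg R' M) where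
  __ := (inferInstance : Ring (SymmAlg R' M))
  mul_comm := by
    intro u v
    obtain ⟨x, rfl⟩ := RingQuot.mkAlgHom_surjective R' (_root_.SymRel R' M) u
    obtain ⟨y, rfl⟩ := RingQuot.mkAlgHom_surjective R' (_root_.SymRel R' M) v
    exact (symmAlg_commute x y).symm ▸ rfl

end CommSec

/-! ### Auxiliary lemmas -/

section SymLiftSec

variable {R' M B : Type*} [CommRing R'] [AddCommGroup M] [Module R' M]
  [CommRing B] [Algebra R' B]

/-- Universal property of the symmetric algebra into commutative rings. -/
noncomputable def symLift (f : M →ₗ[R'] B) : SymmAlg R' M →ₐ[R'] B :=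
  RingQuot.liftAlgHom R' ⟨TensorAlgebra.lift R' f, by
    rintro x y ⟨u, v⟩
    simp only [map_mul, TensorAlgebra.lift_ι_apply]
    exact mul_comm _ _⟩

@[simp] lemma symLift_symι (f : M →ₗ[R'] B) (v : M) :
    symLift f (symι R' M v) = f v := by
  rw [symι]
  simp only [LinearMap.coe_comp, Function.comp_apply, AlgHom.toLinearMap_apply]
  rw [symLift, RingQuot.liftAlgHom_mkAlgHom_apply, TensorAlgebra.lift_ι_apply]

lemma symAlgHom_ext {f g : SymmAlg R' M →ₐ[R'] B}
    (h : ∀ v : M, f (symι R' M v) = g (symι R' M v)) : f = g := by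
  apply RingQuot.ringQuot_ext'
  apply TensorAlgebra.hom_ext
  ext v
  simpa [symι] using h v

end SymLiftSec

lemma symMap_symι (v : E) : symMap R T E (symι R E v) = symι T E v := by
  rw [symι]
  simp only [LinearMap.coe_comp, Function.comp_apply, AlgHom.toLinearMap_apply]
  rw [symMap, RingQuot.liftAlgHom_mkAlgHom_apply, TensorAlgebra.lift_ι_apply]
  rfl

section PolyHelpers
open MvPolynomial

lemma fin2_coord {R : Type*} {M : Type*} [CommRing R] [AddCommGroup M] [Module R M]
    (B : Module.Basis (Fin 2) R M) {r s r' s' : R}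
    (h : r • B 0 + s • B 1 = r' • B 0 + s' • B 1) : r = r' ∧ s = s' := by
  have h0 := congrArg (fun v => B.repr v 0) h
  have h1 := congrArg (fun v => B.repr v 1) h
  simp [Module.Basis.repr_self, Finsupp.single_apply] at h0 h1
  exact ⟨h0, h1⟩

lemma primeX1 {R : Type*} [CommRing R] [IsDomain R] :
    Prime (MvPolynomial.X 1 : MvPolynomial (Fin 2) R) := by
  have h1 : (1 : Fin 2) = Fin.succ 0 := rfl
  rw [h1, ← MulEquiv.prime_iff (MvPolynomial.finSuccEquiv R 1).toMulEquiv]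
  show Prime ((MvPolynomial.finSuccEquiv R 1) (X (Fin.succ 0)))
  rw [finSuccEquiv_X_succ]
  rw [Polynomial.prime_C_iff]
  rw [← MulEquiv.prime_iff (MvPolynomial.finSuccEquiv R 0).toMulEquiv]
  show Prime ((MvPolynomial.finSuccEquiv R 0) (X 0))
  rw [finSuccEquiv_X_zero]
  exact Polynomial.prime_X

lemma div_step {R : Type*} [CommRing R] [IsDomain R]
    {v w : MvPolynomial (Fin 2) R} (h : v * X 0 = w * X 1) :
    ∃ s, v = s * X 1 ∧ w = s * X 0 := by
  have hd : (X 1 : MvPolynomial (Fin 2) R) ∣ v := by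
    have hdd : (X 1 : MvPolynomial (Fin 2) R) ∣ v * X 0 := h ▸ Dvd.intro_left w rfl
    rcases primeX1.2.2 _ _ hdd with hv | hx
    · exact hv
    · exact absurd (X_dvd_X.mp hx) (by decide)
  obtain ⟨s, rfl⟩ := hd
  refine ⟨s, mul_comm _ _, ?_⟩
  exact (mul_left_cancel₀ (X_ne_zero 1) (by linear_combination h)).symm

section Decomp
variable {R' T' : Type*} [CommRing R'] [CommRing T'] [Algebra R' T']
  (bT : Module.Basis (Fin 2) R' T') (z : T') (hbT0 : bT 0 = 1) (hbT1 : bT 1 = z)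

local notation "m" => MvPolynomial.map (algebraMap _ _) (σ := Fin 2)

include bT hbT0 hbT1 in
lemma decomp_exists (w : MvPolynomial (Fin 2) T') :
    ∃ e f : MvPolynomial (Fin 2) R', w = m e + C z * m f := by
  induction w using MvPolynomial.induction_on with
  | C t =>
      refine ⟨C (bT.repr t 0), C (bT.repr t 1), ?_⟩
      have ht : t = bT.repr t 0 • (1 : T') + bT.repr t 1 • z := by
        conv_lhs => rw [← bT.sum_repr t]
        rw [Fin.sum_univ_two, hbT0, hbT1]
      rw [map_C, map_C]
      conv_lhs => rw [ht]
      rw [Algebra.smul_def, Algebra.smul_def, mul_one, map_add, map_mul]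
      ring
  | add p q hp hq =>
      obtain ⟨e1, f1, rfl⟩ := hp
      obtain ⟨e2, f2, rfl⟩ := hq
      exact ⟨e1 + e2, f1 + f2, by push_cast [map_add]; ring⟩
  | mul_X p i hp =>
      obtain ⟨e, f, rfl⟩ := hp
      exact ⟨e * X i, f * X i, by push_cast [map_mul, map_X]; ring⟩

include bT hbT0 hbT1 in
lemma decomp_unique {e f : MvPolynomial (Fin 2) R'}
    (h : m e + C z * m f = 0) : e = 0 ∧ f = 0 := by
  have key : ∀ n : Fin 2 →₀ ℕ, coeff n e = 0 ∧ coeff n f = 0 := by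
    intro n
    have hc := congrArg (coeff n) h
    rw [coeff_add, coeff_C_mul, coeff_map, coeff_map, coeff_zero] at hc
    have hc' : coeff n e • bT 0 + coeff n f • bT 1 = (0 : R') • bT 0 + (0 : R') • bT 1 := by
      rw [hbT0, hbT1, Algebra.smul_def, Algebra.smul_def, mul_one, zero_smul, zero_smul,
        add_zero]
      rw [← hc]; ring
    exact fin2_coord bT hc'
  constructor
  · ext n; simpa using (key n).1
  · ext n; simpa using (key n).2

include bT hbT0 hbT1 in
lemma key_poly [IsDomain R'] (p q a b c d : R')
    (hq : z * z = algebraMap R' T' q + algebraMap R' T' p * z)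
    (h11 : a * a + b * c = q + p * a)
    (h21 : a * b + b * d = p * b)
    (h12 : c * a + d * c = p * c)
    (h22 : c * b + d * d = q + p * d)
    (u : MvPolynomial (Fin 2) R')
    (hu : m u ∈ Ideal.span {C z * X 0 - m (C a * X 0 + C b * X 1),
      C z * X 1 - m (C c * X 0 + C d * X 1)}) :
    u ∈ Ideal.span {C c * X 0 ^ 2 + C (d - a) * (X 0 * X 1) - C b * X 1 ^ 2} := by
  obtain ⟨t1, t2, hT⟩ := Ideal.mem_span_pair.mp hu
  obtain ⟨f1, g1, rfl⟩ := decomp_exists bT z hbT0 hbT1 t1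
  obtain ⟨f2, g2, rfl⟩ := decomp_exists bT z hbT0 hbT1 t2
  set L1 : MvPolynomial (Fin 2) R' := C a * X 0 + C b * X 1 with hL1
  set L2 : MvPolynomial (Fin 2) R' := C c * X 0 + C d * X 1 with hL2
  have hzz : (C z : MvPolynomial (Fin 2) T') * C z
      = m (C q) + C z * m (C p) := by
    rw [map_C, map_C, ← map_mul, hq, map_add, map_mul]
    ring
  have hcomp : m (-(f1 * L1) - f2 * L2 + C q * (g1 * X 0 + g2 * X 1) - u)
      + C z * m (f1 * X 0 + f2 * X 1
          - (g1 * (L1 - C p * X 0) + g2 * (L2 - C p * X 1))) = 0 := by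
    simp only [map_add, map_sub, map_mul, map_neg, MvPolynomial.map_C, map_X, hL1, hL2]
      at hT hzz ⊢
    linear_combination hT - (MvPolynomial.map (algebraMap R' T') g1 * X 0
      + MvPolynomial.map (algebraMap R' T') g2 * X 1) * hzz
  obtain ⟨hE1, hE2⟩ := decomp_unique bT z hbT0 hbT1 hcomp
  rw [sub_eq_zero] at hE1 hE2
  set h1 : MvPolynomial (Fin 2) R' := C (a - p) * g1 + C c * g2 with hh1
  set h2 : MvPolynomial (Fin 2) R' := C b * g1 + C (d - p) * g2 with hh2
  have hvw : (f1 - h1) * X 0 = (-(f2 - h2)) * X 1 := by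
    have hE2' := hE2
    simp only [hL1, hL2, hh1, hh2, map_sub] at hE2' ⊢
    linear_combination hE2'
  obtain ⟨s, hs1, hs2⟩ := div_step hvw
  rw [Ideal.mem_span_singleton']
  refine ⟨s, ?_⟩
  have c11 : (C (a * a + b * c) : MvPolynomial (Fin 2) R') = C (q + p * a) := congrArg C h11
  have c21 : (C (a * b + b * d) : MvPolynomial (Fin 2) R') = C (p * b) := congrArg C h21
  have c12 : (C (c * a + d * c) : MvPolynomial (Fin 2) R') = C (p * c) := congrArg C h12
  have c22 : (C (c * b + d * d) : MvPolynomial (Fin 2) R') = C (q + p * d) := congrArg C h22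
  simp only [map_add, map_mul, map_sub] at c11 c21 c12 c22 hs1 hs2 ⊢
  rw [← hE1]
  simp only [hL1, hL2, hh1, hh2, map_sub] at hs1 hs2 ⊢
  linear_combination (C a * X 0 + C b * X 1) * hs1 - (C c * X 0 + C d * X 1) * hs2
    + (g1 * X 0) * c11 + (g1 * X 1) * c21 + (g2 * X 0) * c12 + (g2 * X 1) * c22

end Decomp
end PolyHelpers

set_option maxHeartbeats 2000000 in
/--
Let `R` be a discrete valuation ring and `T` a commutative `R`-algebra which
is free of rank two as an `R`-module with basis `{1, z}`. Let `E` be a `T`-module which, as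
an `R`-module, is free of rank two with basis `x, y`, and write `z·x = a x + b y` and
`z·y = c x + d y` with `a, b, c, d ∈ R`. Then the kernel of the canonical homomorphism of
graded `R`-algebras `Sym_R(E) → Sym_T(E)` is the ideal generated by the single quadratic
element `c·x² + (d − a)·x·y − b·y²`.
-/
theorem stmt7 [IsDomain R] [IsDiscreteValuationRing R]
    (bT : Module.Basis (Fin 2) R T) (z : T) (hbT0 : bT 0 = 1) (hbT1 : bT 1 = z)
    (bE : Module.Basis (Fin 2) R E) (a b c d : R)
    (hzx : z • bE 0 = a • bE 0 + b • bE 1)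
    (hzy : z • bE 1 = c • bE 0 + d • bE 1) :
    RingHom.ker (symMap R T E) =
      Ideal.span {c • (symι R E (bE 0) * symι R E (bE 0)) +
        (d - a) • (symι R E (bE 0) * symι R E (bE 1)) -
        b • (symι R E (bE 1) * symι R E (bE 1))} := by
  classical
  set q : R := bT.repr (z * z) 0 with hqdef
  set p : R := bT.repr (z * z) 1 with hpdef
  have hq : z * z = algebraMap R T q + algebraMap R T p * z := by
    conv_lhs => rw [← bT.sum_repr (z * z)]
    rw [Fin.sum_univ_two, hbT0, hbT1, Algebra.smul_def, Algebra.smul_def, mul_one]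
  have hsm : ∀ (r : R) (v : E), algebraMap R T r • v = r • v := fun r v =>
    algebraMap_smul T r v
  have hkey : ∀ (r : R) (v : E), z • (r • v) = r • (z • v) := by
    intro r v
    rw [← hsm r v, smul_smul, mul_comm, ← smul_smul, hsm]
  have e1 : (z * z) • bE 0 = (a * a + b * c) • bE 0 + (a * b + b * d) • bE 1 := by
    rw [mul_smul, hzx, smul_add, hkey, hkey, hzx, hzy]
    module
  have e1' : (z * z) • bE 0 = (q + p * a) • bE 0 + (p * b) • bE 1 := by
    rw [hq, add_smul, hsm, mul_smul, hsm, hzx]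
    module
  obtain ⟨h11, h21⟩ := fin2_coord bE (e1.symm.trans e1')
  have e2 : (z * z) • bE 1 = (c * a + d * c) • bE 0 + (c * b + d * d) • bE 1 := by
    rw [mul_smul, hzy, smul_add, hkey, hkey, hzx, hzy]
    module
  have e2' : (z * z) • bE 1 = (p * c) • bE 0 + (q + p * d) • bE 1 := by
    rw [hq, add_smul, hsm, mul_smul, hsm, hzy]
    module
  obtain ⟨h12, h22⟩ := fin2_coord bE (e2.symm.trans e2')
  -- polynomial-side objects
  set Fp : MvPolynomial (Fin 2) R := MvPolynomial.C c * MvPolynomial.X 0 ^ 2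
    + MvPolynomial.C (d - a) * (MvPolynomial.X 0 * MvPolynomial.X 1)
    - MvPolynomial.C b * MvPolynomial.X 1 ^ 2 with hFp
  set I : Ideal (MvPolynomial (Fin 2) T) := Ideal.span
    {MvPolynomial.C z * MvPolynomial.X 0
      - MvPolynomial.map (algebraMap R T)
        (MvPolynomial.C a * MvPolynomial.X 0 + MvPolynomial.C b * MvPolynomial.X 1),
     MvPolynomial.C z * MvPolynomial.X 1
      - MvPolynomial.map (algebraMap R T)
        (MvPolynomial.C c * MvPolynomial.X 0 + MvPolynomial.C d * MvPolynomial.X 1)} with hI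
  set mkI : MvPolynomial (Fin 2) T →ₐ[T] MvPolynomial (Fin 2) T ⧸ I :=
    Ideal.Quotient.mkₐ T I with hmkI
  -- algebra isomorphism data between Sym_R(E) and R[X,Y]
  set β : MvPolynomial (Fin 2) R →ₐ[R] SymmAlg R E :=
    MvPolynomial.aeval (fun i => symι R E (bE i)) with hβ
  set α : SymmAlg R E →ₐ[R] MvPolynomial (Fin 2) R :=
    symLift (bE.constr R (fun i => (MvPolynomial.X i : MvPolynomial (Fin 2) R))) with hα
  have hβX : ∀ i, β (MvPolynomial.X i) = symι R E (bE i) := fun i =>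
    MvPolynomial.aeval_X _ i
  have hβα : ∀ w, β (α w) = w := by
    have hco : β.comp α = AlgHom.id R (SymmAlg R E) := by
      apply symAlgHom_ext
      intro v
      rw [AlgHom.comp_apply, hα, symLift_symι, AlgHom.coe_id, id_eq]
      have hlin : β.toLinearMap ∘ₗ (bE.constr R
          (fun i => (MvPolynomial.X i : MvPolynomial (Fin 2) R))) = symι R E := by
        refine bE.ext fun i => ?_
        simp only [LinearMap.coe_comp, Function.comp_apply, Module.Basis.constr_basis,
          AlgHom.toLinearMap_apply]
        exact hβX i
      exact LinearMap.congr_fun hlin v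
    intro w
    exact AlgHom.congr_fun hco w
  -- the T-linear map ψ : E → T[X,Y]/I
  set ψ0 : E →ₗ[R] (MvPolynomial (Fin 2) T ⧸ I) :=
    bE.constr R (fun i => mkI (MvPolynomial.X i)) with hψ0
  have hψ0b : ∀ i, ψ0 (bE i) = mkI (MvPolynomial.X i) := fun i => bE.constr_basis R _ i
  have hkeyQ : ∀ (r : R) (w : MvPolynomial (Fin 2) T ⧸ I), z • (r • w) = r • (z • w) := by
    intro r w
    rw [← algebraMap_smul T r w, smul_smul, mul_comm, ← smul_smul, algebraMap_smul]
  have hzX0 : z • mkI (MvPolynomial.X 0)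
      = a • mkI (MvPolynomial.X 0) + b • mkI (MvPolynomial.X 1) := by
    rw [← map_smul, MvPolynomial.smul_eq_C_mul]
    have heq : mkI (MvPolynomial.C z * MvPolynomial.X 0)
        = mkI (MvPolynomial.map (algebraMap R T)
            (MvPolynomial.C a * MvPolynomial.X 0 + MvPolynomial.C b * MvPolynomial.X 1)) := by
      rw [hmkI, Ideal.Quotient.mkₐ_eq_mk, Ideal.Quotient.eq]
      exact Ideal.subset_span (by simp)
    rw [heq]
    rw [map_add, map_mul, map_mul, MvPolynomial.map_C, MvPolynomial.map_X,
      MvPolynomial.map_C, MvPolynomial.map_X]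
    rw [map_add, ← MvPolynomial.smul_eq_C_mul, ← MvPolynomial.smul_eq_C_mul,
      map_smul, map_smul, algebraMap_smul, algebraMap_smul]
  have hzX1 : z • mkI (MvPolynomial.X 1)
      = c • mkI (MvPolynomial.X 0) + d • mkI (MvPolynomial.X 1) := by
    rw [← map_smul, MvPolynomial.smul_eq_C_mul]
    have heq : mkI (MvPolynomial.C z * MvPolynomial.X 1)
        = mkI (MvPolynomial.map (algebraMap R T)
            (MvPolynomial.C c * MvPolynomial.X 0 + MvPolynomial.C d * MvPolynomial.X 1)) := by
      rw [hmkI, Ideal.Quotient.mkₐ_eq_mk, Ideal.Quotient.eq]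
      exact Ideal.subset_span (by simp)
    rw [heq]
    rw [map_add, map_mul, map_mul, MvPolynomial.map_C, MvPolynomial.map_X,
      MvPolynomial.map_C, MvPolynomial.map_X]
    rw [map_add, ← MvPolynomial.smul_eq_C_mul, ← MvPolynomial.smul_eq_C_mul,
      map_smul, map_smul, algebraMap_smul, algebraMap_smul]
  have hv : ∀ v : E, v = bE.repr v 0 • bE 0 + bE.repr v 1 • bE 1 := by
    intro v
    conv_lhs => rw [← bE.sum_repr v]
    rw [Fin.sum_univ_two]
  have hψz : ∀ v : E, ψ0 (z • v) = z • ψ0 v := by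
    intro v
    rw [hv v, smul_add, hkey, hkey, hzx, hzy]
    simp only [map_add, map_smul, hψ0b]
    conv_rhs => rw [smul_add, hkeyQ, hkeyQ, hzX0, hzX1]
  set ψ : E →ₗ[T] (MvPolynomial (Fin 2) T ⧸ I) :=
    { toFun := ψ0
      map_add' := ψ0.map_add
      map_smul' := by
        intro t v
        simp only [RingHom.id_apply]
        have ht : t = bT.repr t 0 • (1 : T) + bT.repr t 1 • z := by
          conv_lhs => rw [← bT.sum_repr t]
          rw [Fin.sum_univ_two, hbT0, hbT1]
        rw [ht, add_smul, add_smul]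
        simp only [smul_assoc, one_smul, map_add, map_smul, hψz] } with hψdef
  set γ : SymmAlg T E →ₐ[T] (MvPolynomial (Fin 2) T ⧸ I) := symLift ψ with hγ
  set Ψ : MvPolynomial (Fin 2) R →ₐ[R] (MvPolynomial (Fin 2) T ⧸ I) :=
    MvPolynomial.aeval (fun i => mkI (MvPolynomial.X i)) with hΨ
  have hsq : ((γ.restrictScalars R).comp ((symMap R T E).comp β)) = Ψ := by
    apply MvPolynomial.algHom_ext
    intro i
    simp only [AlgHom.comp_apply, AlgHom.coe_restrictScalars']
    rw [hβX i, symMap_symι, hγ, symLift_symι]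
    show ψ0 (bE i) = Ψ (MvPolynomial.X i)
    rw [hψ0b i, hΨ, MvPolynomial.aeval_X]
  have hΨmap : ∀ u : MvPolynomial (Fin 2) R,
      Ψ u = mkI (MvPolynomial.map (algebraMap R T) u) := by
    intro u
    have hmk : ∀ w : MvPolynomial (Fin 2) T,
        mkI w = MvPolynomial.aeval (R := T) (fun i => mkI (MvPolynomial.X i)) w := by
      intro w
      conv_lhs => rw [MvPolynomial.aeval_unique mkI]
      rfl
    rw [hmk, MvPolynomial.aeval_map_algebraMap, hΨ]
  -- the quadratic element
  set Fsym : SymmAlg R E := c • (symι R E (bE 0) * symι R E (bE 0)) +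
        (d - a) • (symι R E (bE 0) * symι R E (bE 1)) -
        b • (symι R E (bE 1) * symι R E (bE 1)) with hFsym
  have hβC : ∀ r : R, β (MvPolynomial.C r) = algebraMap R (SymmAlg R E) r := fun r =>
    MvPolynomial.aeval_C _ r
  have hβF : β Fp = Fsym := by
    rw [hFp, hFsym]
    simp only [map_sub, map_add, map_mul, map_pow, MvPolynomial.aeval_X, hβX, hβC,
      Algebra.smul_def]
    ring
  apply le_antisymm
  · -- ker ⊆ span
    intro w hw
    have hw0 : symMap R T E w = 0 := by rwa [RingHom.mem_ker] at hw
    have hΨu : Ψ (α w) = 0 := by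
      rw [← hsq]
      simp only [AlgHom.comp_apply, AlgHom.coe_restrictScalars']
      rw [hβα w, hw0, map_zero]
    have hmem : MvPolynomial.map (algebraMap R T) (α w) ∈ I := by
      rw [hΨmap] at hΨu
      rw [hmkI, Ideal.Quotient.mkₐ_eq_mk] at hΨu
      exact Ideal.Quotient.eq_zero_iff_mem.mp hΨu
    have hF := key_poly bT z hbT0 hbT1 p q a b c d hq h11 h21 h12 h22 (α w) hmem
    obtain ⟨k, hk⟩ := Ideal.mem_span_singleton'.mp hF
    rw [Ideal.mem_span_singleton']
    refine ⟨β k, ?_⟩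
    rw [← hβF, ← map_mul, hk]
    exact hβα w
  · -- span ⊆ ker
    rw [Ideal.span_le, Set.singleton_subset_iff]
    rw [SetLike.mem_coe, RingHom.mem_ker]
    have hsymR : ∀ (r : R) (v : E), symι T E (r • v) = r • symι T E v := by
      intro r v
      rw [← algebraMap_smul T r v, map_smul, algebraMap_smul]
    have hcal : symι T E (z • bE 0) * symι T E (bE 1)
        = symι T E (bE 0) * symι T E (z • bE 1) := by
      rw [map_smul, map_smul, smul_mul_assoc, mul_smul_comm]
    rw [hzx, hzy, map_add, map_add, hsymR, hsymR, hsymR, hsymR] at hcal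
    rw [hFsym]
    simp only [map_sub, map_add, map_smul, map_mul, symMap_symι]
    simp only [Algebra.smul_def, map_sub] at hcal ⊢
    linear_combination -hcal
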